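/- Let L be a number field and let β₁, …, β₈ ∈ L satisfy: 2β_k ∈ O_L for all k, β_k − β_ℓ ∈ O_L for all k, ℓ, and β₁ + ⋯ + β₈ = 0. Then Σ_σ [ (|σ(β₁)|² − (7/4) Re σ(β₁)) + Σ_{k=2}^8 (|σ(β_k)|² + (1/4) Re σ(β_k)) ] ≥ 0 and Σ_σ [ Σ_{k=1}^2 (|σ(β_k)|² − (3/2) Re σ(β_k)) + Σ_{k=3}^8 (|σ(β_k)|² + (1/2) Re σ(β_k)) ] ≥ 0, where σ ranges over all field embeddings of L into ℂ. -/

import Mathlib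

open NumberField


open NumberField Finset

section Helpers

variable {L : Type*} [Field L] [NumberField L]

private lemma prod_abs_eq_abs_norm (x : L) :
    ∏ φ : L →+* ℂ, ‖φ x‖ = ((|Algebra.norm ℚ x| : ℚ) : ℝ) := by
  have h := congr_arg (‖·‖) (Algebra.norm_eq_prod_embeddings ℚ ℂ x)
  rw [norm_prod] at h
  rw [Fintype.prod_equiv (RingHom.equivRatAlgHom L ℂ) (fun φ : L →+* ℂ => ‖φ x‖)
      (fun ψ : L →ₐ[ℚ] ℂ => ‖ψ x‖)
      (fun _ => by simp [RingHom.equivRatAlgHom_apply])]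
  rw [← h, eq_ratCast, Rat.cast_abs, ← Real.norm_eq_abs, ← Complex.norm_real, Complex.ofReal_ratCast]

private lemma card_le_sum_sq (x : L) (hx : x ≠ 0) (hint : IsIntegral ℤ x) :
    (Fintype.card (L →+* ℂ) : ℝ) ≤ ∑ σ : L →+* ℂ, ‖σ x‖ ^ 2 := by
  set n := Fintype.card (L →+* ℂ) with hn
  have hn0 : 0 < n := Fintype.card_pos
  have hprod : (1:ℝ) ≤ ∏ φ : L →+* ℂ, ‖φ x‖ := by
    rw [prod_abs_eq_abs_norm]
    obtain ⟨m, hm⟩ := IsIntegrallyClosed.isIntegral_iff.mp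
      (Algebra.isIntegral_norm (K := ℚ) hint)
    have h0 : Algebra.norm ℚ x ≠ 0 := by
      rw [Algebra.norm_ne_zero_iff]; exact hx
    have hm0 : m ≠ 0 := by rintro rfl; simp at hm; exact h0 hm.symm
    rw [← hm]
    have h1 : (1:ℤ) ≤ |m| := Int.one_le_abs hm0
    have : ((1:ℤ):ℝ) ≤ ((|m| : ℤ) : ℝ) := by exact_mod_cast h1
    simpa [eq_intCast] using this
  have hw : ∑ _σ : L →+* ℂ, ((n:ℝ))⁻¹ = 1 := by
    rw [Finset.sum_const, Finset.card_univ, ← hn, nsmul_eq_mul]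
    field_simp
  have amgm := Real.geom_mean_le_arith_mean_weighted Finset.univ
      (fun _ : (L →+* ℂ) => ((n:ℝ))⁻¹) (fun σ => ‖σ x‖ ^ 2)
      (fun _ _ => by positivity) hw (fun _ _ => by positivity)
  have hgm : (1:ℝ) ≤ ∏ σ : L →+* ℂ, (‖σ x‖ ^ 2) ^ ((n:ℝ))⁻¹ := by
    rw [Real.finset_prod_rpow _ _ (fun _ _ => by positivity)]
    refine Real.one_le_rpow ?_ (by positivity)
    calc (1:ℝ) ≤ (∏ φ : L →+* ℂ, ‖φ x‖) := hprod
    _ ≤ (∏ φ : L →+* ℂ, ‖φ x‖) ^ 2 := by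
        nlinarith [hprod]
    _ = ∏ φ : L →+* ℂ, ‖φ x‖ ^ 2 := by rw [Finset.prod_pow]
  have hle : (1:ℝ) ≤ ∑ σ : L →+* ℂ, ((n:ℝ))⁻¹ * (‖σ x‖ ^ 2) := le_trans hgm amgm
  rw [← Finset.mul_sum] at hle
  have hnr : (0:ℝ) < (n:ℝ) := by exact_mod_cast hn0
  calc (n:ℝ) = (n:ℝ) * 1 := by ring
  _ ≤ (n:ℝ) * ((n:ℝ)⁻¹ * ∑ σ : L →+* ℂ, ‖σ x‖ ^ 2) := by
      exact mul_le_mul_of_nonneg_left hle (le_of_lt hnr)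
  _ = ∑ σ : L →+* ℂ, ‖σ x‖ ^ 2 := by field_simp

private lemma sum_sq_scaled (r : ℕ) (m : L) (hm : IsIntegral ℤ m) (h0 : m ≠ 0) :
    ((r:ℝ))^2 * (Fintype.card (L →+* ℂ) : ℝ) ≤
      ∑ σ : L →+* ℂ, ‖σ (((r:ℕ):L) * m)‖ ^ 2 := by
  have hpt : ∀ σ : L →+* ℂ, ‖σ (((r:ℕ):L) * m)‖ ^ 2
      = (r:ℝ)^2 * ‖σ m‖ ^ 2 := by
    intro σ
    rw [map_mul, norm_mul, map_natCast, Complex.norm_natCast]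
    ring
  rw [Finset.sum_congr rfl (fun σ _ => hpt σ), ← Finset.mul_sum]
  exact mul_le_mul_of_nonneg_left (card_le_sum_sq m h0 hm) (by positivity)

omit [NumberField L] in
private lemma intCast_isIntegral (m : ℤ) : IsIntegral ℤ ((m : L)) :=
  (eq_intCast (algebraMap ℤ L) m) ▸ isIntegral_algebraMap

private lemma cy_add_one_ne (c : ℤ) (hc : 2 ≤ c) (y : L) (hy : IsIntegral ℤ y) :
    ((c:ℤ):L) * y + 1 ≠ 0 := by
  intro h
  have hcL : ((c:ℤ):L) ≠ 0 := Int.cast_ne_zero.mpr (by omega)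
  have hcQ : ((c:ℤ):ℚ) ≠ 0 := Int.cast_ne_zero.mpr (by omega)
  have heq : ((c:ℤ):L) * y = ((c:ℤ):L) * algebraMap ℚ L (-(1/(c:ℚ))) := by
    rw [eq_ratCast]
    push_cast
    field_simp
    linear_combination h
  have hyq : y = algebraMap ℚ L (-(1/(c:ℚ))) := mul_left_cancel₀ hcL heq
  rw [hyq] at hy
  rw [isIntegral_algebraMap_iff ((algebraMap ℚ L).injective)] at hy
  obtain ⟨m, hm⟩ := IsIntegrallyClosed.isIntegral_iff.mp hy
  have hm' : ((m:ℤ):ℚ) = -(1/(c:ℚ)) := by rw [← hm, eq_intCast]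
  have hcm : (c:ℚ) * (m:ℚ) = -1 := by
    rw [hm']
    field_simp
  have hcmz : c * m = -1 := by exact_mod_cast hcm
  have hdvd : c ∣ 1 := ⟨-m, by linarith⟩
  have := Int.le_of_dvd one_pos hdvd
  omega

end Helpers

section Combinatorics

private lemma pairbound {X : Type*} (t : Fin 8 → X) (c : ℝ) (D : Fin 8 → Fin 8 → ℝ)
    (hpos : ∀ k l, 0 ≤ D k l) (hD : ∀ k l, t k ≠ t l → c ≤ D k l)
    (a b : Fin 8) (hab : t a ≠ t b) : ∀ k, c ≤ D k a + D k b := by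
  intro k
  rcases ne_or_eq (t k) (t a) with h | h
  · have := hD k a h; have := hpos k b; linarith
  · have h2 : t k ≠ t b := by rw [h]; exact hab
    have := hD k b h2; have := hpos k a; linarith

private lemma pairbound' {X : Type*} (t : Fin 8 → X) (c : ℝ) (D : Fin 8 → Fin 8 → ℝ)
    (hpos : ∀ k l, 0 ≤ D k l) (hD : ∀ k l, t k ≠ t l → c ≤ D k l)
    (a b : Fin 8) (hab : t a ≠ t b) : ∀ k, c ≤ D a k + D b k := by
  intro k
  rcases ne_or_eq (t a) (t k) with h | h
  · have := hD a k h; have := hpos b k; linarith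
  · have h2 : t b ≠ t k := by rw [← h]; exact fun hh => hab hh.symm
    have := hD b k h2; have := hpos a k; linarith

private lemma coreA {X : Type*} (t : Fin 8 → X) (c : ℝ) (D : Fin 8 → Fin 8 → ℝ)
    (hpos : ∀ k l, 0 ≤ D k l) (hD : ∀ k l, t k ≠ t l → c ≤ D k l)
    (a b : Fin 8) (hab : t a ≠ t b) :
    14 * c ≤ ∑ k, ∑ l, D k l := by
  have hne : a ≠ b := fun h => hab (by rw [h])
  have hsplit : ∀ k : Fin 8, ∑ l, D k l =
      (∑ l ∈ ({a, b} : Finset (Fin 8)), D k l) +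
        ∑ l ∈ ({a, b} : Finset (Fin 8))ᶜ, D k l :=
    fun k => (Finset.sum_add_sum_compl _ _).symm
  have hcard : (({a, b} : Finset (Fin 8))ᶜ).card = 6 := by
    rw [Finset.card_compl, Finset.card_pair hne]; rfl
  have h1 : 8 * c ≤ ∑ k : Fin 8, ∑ l ∈ ({a, b} : Finset (Fin 8)), D k l := by
    have hk : ∀ k : Fin 8, c ≤ ∑ l ∈ ({a, b} : Finset (Fin 8)), D k l := by
      intro k; rw [Finset.sum_pair hne]; exact pairbound t c D hpos hD a b hab k
    calc (8:ℝ) * c = ∑ _k : Fin 8, c := by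
          rw [Finset.sum_const, Finset.card_univ, Fintype.card_fin, nsmul_eq_mul]; norm_num
    _ ≤ _ := Finset.sum_le_sum (fun k _ => hk k)
  have h2 : 6 * c ≤ ∑ k : Fin 8, ∑ l ∈ ({a, b} : Finset (Fin 8))ᶜ, D k l := by
    have hsub : ∑ k ∈ ({a, b} : Finset (Fin 8)), (∑ l ∈ ({a, b} : Finset (Fin 8))ᶜ, D k l)
        ≤ ∑ k : Fin 8, ∑ l ∈ ({a, b} : Finset (Fin 8))ᶜ, D k l :=
      Finset.sum_le_sum_of_subset_of_nonneg (Finset.subset_univ _)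
        (fun k _ _ => Finset.sum_nonneg (fun l _ => hpos k l))
    have hin : 6 * c ≤ ∑ k ∈ ({a, b} : Finset (Fin 8)), ∑ l ∈ ({a, b} : Finset (Fin 8))ᶜ, D k l := by
      rw [Finset.sum_pair hne, ← Finset.sum_add_distrib]
      have hl : ∀ l ∈ ({a, b} : Finset (Fin 8))ᶜ, c ≤ D a l + D b l := by
        intro l _; exact pairbound' t c D hpos hD a b hab l
      calc (6:ℝ) * c = ∑ _l ∈ ({a, b} : Finset (Fin 8))ᶜ, c := by
            rw [Finset.sum_const, hcard, nsmul_eq_mul]; norm_num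
      _ ≤ _ := Finset.sum_le_sum hl
    linarith
  calc 14 * c = 8 * c + 6 * c := by ring
  _ ≤ _ := by
      rw [show (∑ k, ∑ l, D k l) = _ from Finset.sum_congr rfl (fun k _ => hsplit k),
        Finset.sum_add_distrib]
      exact add_le_add h1 h2

private lemma coreB {X : Type*} (t : Fin 8 → X) (c : ℝ) (D : Fin 8 → Fin 8 → ℝ)
    (hpos : ∀ k l, 0 ≤ D k l) (hD : ∀ k l, t k ≠ t l → c ≤ D k l)
    (a b u v : Fin 8) (hau : a ≠ u) (hav : a ≠ v) (hbu : b ≠ u) (hbv : b ≠ v)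
    (hab : t a ≠ t b) (huv : t u ≠ t v) :
    24 * c ≤ ∑ k, ∑ l, D k l := by
  have hne : a ≠ b := fun h => hab (by rw [h])
  have hne2 : u ≠ v := fun h => huv (by rw [h])
  set Q : Finset (Fin 8) := {a, b, u, v} with hQ
  have haQ : a ∉ ({b, u, v} : Finset (Fin 8)) := by simp [hne, hau, hav]
  have hbQ : b ∉ ({u, v} : Finset (Fin 8)) := by simp [hbu, hbv]
  have huQ : u ∉ ({v} : Finset (Fin 8)) := by simp [hne2]
  have hQsum : ∀ f : Fin 8 → ℝ, ∑ l ∈ Q, f l = f a + f b + f u + f v := by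
    intro f
    rw [hQ, Finset.sum_insert haQ, Finset.sum_insert hbQ, Finset.sum_insert huQ,
      Finset.sum_singleton]
    ring
  have hQcard : Q.card = 4 := by
    rw [hQ, Finset.card_insert_of_notMem haQ, Finset.card_insert_of_notMem hbQ,
      Finset.card_insert_of_notMem huQ, Finset.card_singleton]
  have hcard : (Qᶜ).card = 4 := by rw [Finset.card_compl, hQcard]; rfl
  have hsplit : ∀ k : Fin 8, ∑ l, D k l = (∑ l ∈ Q, D k l) + ∑ l ∈ Qᶜ, D k l :=
    fun k => (Finset.sum_add_sum_compl _ _).symm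
  have h1 : 16 * c ≤ ∑ k : Fin 8, ∑ l ∈ Q, D k l := by
    have hk : ∀ k : Fin 8, c + c ≤ ∑ l ∈ Q, D k l := by
      intro k
      rw [hQsum]
      have g1 := pairbound t c D hpos hD a b hab k
      have g2 := pairbound t c D hpos hD u v huv k
      linarith
    calc (16:ℝ) * c = ∑ _k : Fin 8, (c + c) := by
          rw [Finset.sum_const, Finset.card_univ, Fintype.card_fin, nsmul_eq_mul]; ring
    _ ≤ _ := Finset.sum_le_sum (fun k _ => hk k)
  have h2 : 8 * c ≤ ∑ k : Fin 8, ∑ l ∈ Qᶜ, D k l := by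
    have hsub : ∑ k ∈ Q, (∑ l ∈ Qᶜ, D k l) ≤ ∑ k : Fin 8, ∑ l ∈ Qᶜ, D k l :=
      Finset.sum_le_sum_of_subset_of_nonneg (Finset.subset_univ _)
        (fun k _ _ => Finset.sum_nonneg (fun l _ => hpos k l))
    have hin : 8 * c ≤ ∑ k ∈ Q, ∑ l ∈ Qᶜ, D k l := by
      rw [Finset.sum_comm]
      have hl : ∀ l ∈ Qᶜ, c + c ≤ ∑ k ∈ Q, D k l := by
        intro l _
        rw [hQsum (fun k => D k l)]
        have g1 := pairbound' t c D hpos hD a b hab l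
        have g2 := pairbound' t c D hpos hD u v huv l
        linarith
      calc (8:ℝ) * c = ∑ _l ∈ Qᶜ, (c + c) := by
            rw [Finset.sum_const, hcard, nsmul_eq_mul]; ring
      _ ≤ _ := Finset.sum_le_sum hl
    linarith
  calc 24 * c = 16 * c + 8 * c := by ring
  _ ≤ _ := by
      rw [show (∑ k, ∑ l, D k l) = _ from Finset.sum_congr rfl (fun k _ => hsplit k),
        Finset.sum_add_distrib]
      exact add_le_add h1 h2

private lemma extract {X : Type*} (t : Fin 8 → X)
    (h : ∀ j : Fin 8, ∃ k l : Fin 8, k ≠ j ∧ l ≠ j ∧ t k ≠ t l) :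
    ∃ a b u v : Fin 8, a ≠ u ∧ a ≠ v ∧ b ≠ u ∧ b ≠ v ∧ t a ≠ t b ∧ t u ≠ t v := by
  obtain ⟨a, b, -, -, hab⟩ := h 0
  have hne : a ≠ b := fun hh => hab (by rw [hh])
  by_cases hcd : ∃ u v : Fin 8, u ≠ a ∧ u ≠ b ∧ v ≠ a ∧ v ≠ b ∧ t u ≠ t v
  · obtain ⟨u, v, hua, hub, hva, hvb, huv⟩ := hcd
    exact ⟨a, b, u, v, fun hh => hua hh.symm, fun hh => hva hh.symm,
      fun hh => hub hh.symm, fun hh => hvb hh.symm, hab, huv⟩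
  · push_neg at hcd
    have hout : ∀ u v : Fin 8, u ≠ a → u ≠ b → v ≠ a → v ≠ b → t u = t v := by
      intro u v h1 h2 h3 h4
      exact hcd u v h1 h2 h3 h4
    obtain ⟨k₀, hk₀, k₁, hk₁, hk01⟩ :
        ∃ k₀ ∈ ({a, b} : Finset (Fin 8))ᶜ, ∃ k₁ ∈ ({a, b} : Finset (Fin 8))ᶜ, k₀ ≠ k₁ := by
      apply Finset.one_lt_card.mp
      rw [Finset.card_compl, Fintype.card_fin, Finset.card_pair hne]
      norm_num
    simp only [Finset.mem_compl, Finset.mem_insert, Finset.mem_singleton, not_or] at hk₀ hk₁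
    obtain ⟨hk₀a, hk₀b⟩ := hk₀
    obtain ⟨hk₁a, hk₁b⟩ := hk₁
    have hkk : t k₁ = t k₀ := hout k₁ k₀ hk₁a hk₁b hk₀a hk₀b
    rcases ne_or_eq (t a) (t k₀) with ha | ha
    · rcases ne_or_eq (t b) (t k₀) with hb | hb
      · refine ⟨a, k₀, b, k₁, hne, fun hh => hk₁a hh.symm,
          hk₀b, hk01, ha, ?_⟩
        rw [hkk]; exact hb
      · exfalso
        obtain ⟨k, l, hka, hla, hkl⟩ := h a
        apply hkl
        have hk : t k = t k₀ := by
          rcases ne_or_eq k b with hkb | hkb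
          · exact hout k k₀ hka hkb hk₀a hk₀b
          · rw [hkb, hb]
        have hl : t l = t k₀ := by
          rcases ne_or_eq l b with hlb | hlb
          · exact hout l k₀ hla hlb hk₀a hk₀b
          · rw [hlb, hb]
        rw [hk, hl]
    · exfalso
      obtain ⟨k, l, hkb, hlb, hkl⟩ := h b
      apply hkl
      have hk : t k = t k₀ := by
        rcases ne_or_eq k a with hka | hka
        · exact hout k k₀ hka hkb hk₀a hk₀b
        · rw [hka, ← ha]
      have hl : t l = t k₀ := by
        rcases ne_or_eq l a with hla | hla
        · exact hout l k₀ hla hlb hk₀a hk₀b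
        · rw [hla, ← ha]
      rw [hk, hl]

end Combinatorics

section ComplexIdentities

noncomputable def cA : Fin 8 → ℂ := fun k => if k = 0 then 7 else -1
noncomputable def cB : Fin 8 → ℂ := fun k => if (k : ℕ) < 2 then 3 else -1

private lemma pair_id (w : Fin 8 → ℂ) (hw : ∑ k, w k = 0) :
    ∑ k, ‖w k‖ ^ 2 = (1/16) * ∑ k, ∑ l, ‖w k - w l‖ ^ 2 := by
  have key : ∀ k, ∑ l, Complex.normSq (w k - w l)
      = 8 * Complex.normSq (w k) + ∑ l, Complex.normSq (w l) := by
    intro k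
    have hc : ∑ l, (w k * (starRingEnd ℂ) (w l)).re = 0 := by
      rw [← Complex.re_sum, ← Finset.mul_sum, ← map_sum, hw]
      simp
    have hpt : ∀ l : Fin 8, Complex.normSq (w k - w l) =
        Complex.normSq (w k) + Complex.normSq (w l) - 2 * (w k * (starRingEnd ℂ) (w l)).re :=
      fun l => Complex.normSq_sub _ _
    rw [Finset.sum_congr rfl (fun l _ => hpt l)]
    rw [Finset.sum_sub_distrib, Finset.sum_add_distrib, ← Finset.mul_sum, hc]
    rw [Finset.sum_const, Finset.card_univ, Fintype.card_fin, nsmul_eq_mul]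
    push_cast; ring
  simp only [Complex.sq_norm]
  rw [Finset.sum_congr rfl (fun k (_ : k ∈ Finset.univ) => key k)]
  rw [Finset.sum_add_distrib, ← Finset.mul_sum, Finset.sum_const, Finset.card_univ,
    Fintype.card_fin, nsmul_eq_mul]
  push_cast; ring

private lemma exprA (z : Fin 8 → ℂ) :
    (‖z 0‖ ^ 2 - (7 / 4 : ℝ) * (z 0).re) +
      ∑ k ∈ Finset.univ.filter (fun k : Fin 8 => k ≠ 0),
        (‖z k‖ ^ 2 + (1 / 4 : ℝ) * (z k).re)
    = (1/64) * (∑ k, ‖8 * z k - cA k‖ ^ 2) - 7/8 := by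
  have e0 : ((0:Fin 8) = 0) = True := eq_true (by decide)
  have e1 : ((1:Fin 8) = 0) = False := eq_false (by decide)
  have e2 : ((2:Fin 8) = 0) = False := eq_false (by decide)
  have e3 : ((3:Fin 8) = 0) = False := eq_false (by decide)
  have e4 : ((4:Fin 8) = 0) = False := eq_false (by decide)
  have e5 : ((5:Fin 8) = 0) = False := eq_false (by decide)
  have e6 : ((6:Fin 8) = 0) = False := eq_false (by decide)
  have e7 : ((7:Fin 8) = 0) = False := eq_false (by decide)
  simp only [Finset.sum_filter, Fin.sum_univ_eight, cA, Complex.sq_norm, ne_eq,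
    e0, e1, e2, e3, e4, e5, e6, e7, if_true, if_false, ite_true, ite_false,
    not_true, not_false_iff]
  norm_num [Complex.normSq_apply, Complex.sub_re, Complex.sub_im, Complex.mul_re,
    Complex.mul_im, Complex.neg_re, Complex.neg_im, Complex.one_re, Complex.one_im]
  ring

private lemma exprB (z : Fin 8 → ℂ) :
    (∑ k ∈ Finset.univ.filter (fun k : Fin 8 => (k : ℕ) < 2),
        (‖z k‖ ^ 2 - (3 / 2 : ℝ) * (z k).re)) +
      ∑ k ∈ Finset.univ.filter (fun k : Fin 8 => 2 ≤ (k : ℕ)),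
        (‖z k‖ ^ 2 + (1 / 2 : ℝ) * (z k).re)
    = (1/16) * (∑ k, ‖4 * z k - cB k‖ ^ 2) - 3/2 := by
  have e0 : (((0:Fin 8) : ℕ) < 2) = True := eq_true (by decide)
  have e1 : (((1:Fin 8) : ℕ) < 2) = True := eq_true (by decide)
  have e2 : (((2:Fin 8) : ℕ) < 2) = False := eq_false (by decide)
  have e3 : (((3:Fin 8) : ℕ) < 2) = False := eq_false (by decide)
  have e4 : (((4:Fin 8) : ℕ) < 2) = False := eq_false (by decide)
  have e5 : (((5:Fin 8) : ℕ) < 2) = False := eq_false (by decide)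
  have e6 : (((6:Fin 8) : ℕ) < 2) = False := eq_false (by decide)
  have e7 : (((7:Fin 8) : ℕ) < 2) = False := eq_false (by decide)
  have f0 : (2 ≤ ((0:Fin 8) : ℕ)) = False := eq_false (by decide)
  have f1 : (2 ≤ ((1:Fin 8) : ℕ)) = False := eq_false (by decide)
  have f2 : (2 ≤ ((2:Fin 8) : ℕ)) = True := eq_true (by decide)
  have f3 : (2 ≤ ((3:Fin 8) : ℕ)) = True := eq_true (by decide)
  have f4 : (2 ≤ ((4:Fin 8) : ℕ)) = True := eq_true (by decide)
  have f5 : (2 ≤ ((5:Fin 8) : ℕ)) = True := eq_true (by decide)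
  have f6 : (2 ≤ ((6:Fin 8) : ℕ)) = True := eq_true (by decide)
  have f7 : (2 ≤ ((7:Fin 8) : ℕ)) = True := eq_true (by decide)
  simp only [Finset.sum_filter, Fin.sum_univ_eight, cB, Complex.sq_norm,
    e0, e1, e2, e3, e4, e5, e6, e7, f0, f1, f2, f3, f4, f5, f6, f7,
    if_true, if_false, ite_true, ite_false]
  norm_num [Complex.normSq_apply, Complex.sub_re, Complex.sub_im, Complex.mul_re,
    Complex.mul_im, Complex.neg_re, Complex.neg_im, Complex.one_re, Complex.one_im]
  ring

end ComplexIdentities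

open NumberField

/-- Lemma 5.16 (the condition P(L/ℚ, E₇) at the vertices of the Voronoi cell of E₇):
for `β₁, …, β₈ ∈ ½𝓞_L` with the same class in `(½𝓞_L)/𝓞_L` and zero sum:
`Σ_σ [(|σ(β₁)|² − (7/4) Re σ(β₁)) + Σ_{k=2}^8 (|σ(β_k)|² + (1/4) Re σ(β_k))] ≥ 0` and
`Σ_σ [Σ_{k=1}^2 (|σ(β_k)|² − (3/2) Re σ(β_k)) + Σ_{k=3}^8 (|σ(β_k)|² + (1/2) Re σ(β_k))] ≥ 0`. -/
theorem statement7 (L : Type*) [Field L] [NumberField L] (β : Fin 8 → L)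
    (h2 : ∀ k, IsIntegral ℤ (2 * β k))
    (hdiff : ∀ k l, IsIntegral ℤ (β k - β l))
    (hsum : ∑ k, β k = 0) :
    (0 ≤ ∑ σ : L →+* ℂ,
        ((‖σ (β 0)‖ ^ 2 - (7 / 4 : ℝ) * (σ (β 0)).re) +
          ∑ k ∈ Finset.univ.filter (fun k : Fin 8 => k ≠ 0),
            (‖σ (β k)‖ ^ 2 + (1 / 4 : ℝ) * (σ (β k)).re))) ∧
      (0 ≤ ∑ σ : L →+* ℂ,
        ((∑ k ∈ Finset.univ.filter (fun k : Fin 8 => (k : ℕ) < 2),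
            (‖σ (β k)‖ ^ 2 - (3 / 2 : ℝ) * (σ (β k)).re)) +
          ∑ k ∈ Finset.univ.filter (fun k : Fin 8 => 2 ≤ (k : ℕ)),
            (‖σ (β k)‖ ^ 2 + (1 / 2 : ℝ) * (σ (β k)).re))) := by
  have hn0 : (0:ℝ) ≤ (Fintype.card (L →+* ℂ) : ℝ) := by positivity
  set n : ℕ := Fintype.card (L →+* ℂ) with hndef
  constructor
  · -- PART A
    set t : Fin 8 → L := fun k => 8 * β k - (if k = 0 then (7:L) else -1) with ht
    have hmap : ∀ (σ : L →+* ℂ) (k : Fin 8), σ (t k) = 8 * σ (β k) - cA k := by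
      intro σ k
      by_cases hk : k = 0
      · subst hk
        simp [ht, cA, map_sub, map_mul, map_ofNat]
      · simp [ht, cA, hk, map_sub, map_mul, map_ofNat, map_neg, map_one]
    have hnz : ∀ k, t k ≠ 0 := by
      intro k
      by_cases hk : k = 0
      · subst hk
        have e : t 0 = ((4:ℤ):L) * (2 * β 0 - ((2:ℤ):L)) + 1 := by
          simp only [ht]
          push_cast
          norm_num
          ring
        rw [e]
        exact cy_add_one_ne 4 (by norm_num) _ ((h2 0).sub (intCast_isIntegral 2))
      · have e : t k = ((4:ℤ):L) * (2 * β k) + 1 := by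
          simp only [ht, if_neg hk]
          push_cast
          ring
        rw [e]
        exact cy_add_one_ne 4 (by norm_num) _ (h2 k)
    have htsum : ∑ k, t k = 0 := by
      have he : ∑ k : Fin 8, (if k = 0 then (7:L) else -1) = 0 := by
        rw [Fin.sum_univ_eight, if_pos rfl, if_neg (by decide), if_neg (by decide),
          if_neg (by decide), if_neg (by decide), if_neg (by decide), if_neg (by decide),
          if_neg (by decide)]
        ring
      have hs : ∑ k, t k = 8 * (∑ k, β k) - ∑ k : Fin 8, (if k = 0 then (7:L) else -1) := by
        rw [Finset.mul_sum, ← Finset.sum_sub_distrib]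
      rw [hs, hsum, he]
      ring
    have hσt : ∀ σ : L →+* ℂ, ∑ k, σ (t k) = 0 := by
      intro σ; rw [← map_sum, htsum, map_zero]
    have hconst : ∀ j : Fin 8, (if j = 0 then (7:L) else -1)
        = 8 * (if j = 0 then (1:L) else 0) - 1 := by
      intro j; by_cases hj : j = 0 <;> simp [hj] <;> norm_num
    have hdint : ∀ j : Fin 8, IsIntegral ℤ (if j = 0 then (1:L) else 0) := by
      intro j; by_cases hj : j = 0 <;> simp [hj] <;> first | exact isIntegral_one | exact isIntegral_zero
    have hdiff8 : ∀ k l, t k ≠ t l →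
        ∃ m : L, IsIntegral ℤ m ∧ m ≠ 0 ∧ t k - t l = ((8:ℕ):L) * m := by
      intro k l hkl
      refine ⟨(β k - β l) - ((if k = 0 then (1:L) else 0) - (if l = 0 then (1:L) else 0)),
        (hdiff k l).sub ((hdint k).sub (hdint l)), ?_, ?_⟩
      · intro h0
        apply hkl
        have heq : t k - t l = ((8:ℕ):L) *
            ((β k - β l) - ((if k = 0 then (1:L) else 0) - (if l = 0 then (1:L) else 0))) := by
          simp only [ht]
          rw [hconst k, hconst l]
          push_cast
          ring
        rw [h0, mul_zero] at heq
        exact sub_eq_zero.mp heq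
      · simp only [ht]
        rw [hconst k, hconst l]
        push_cast
        ring
    set D : Fin 8 → Fin 8 → ℝ :=
      fun k l => ∑ σ : L →+* ℂ, ‖σ (t k - t l)‖ ^ 2 with hD
    have hDpos : ∀ k l, 0 ≤ D k l :=
      fun k l => Finset.sum_nonneg fun σ _ => by positivity
    have hDlow : ∀ k l, t k ≠ t l → (64:ℝ) * (n:ℝ) ≤ D k l := by
      intro k l hkl
      obtain ⟨m, hmi, hm0, heq⟩ := hdiff8 k l hkl
      have hb := sum_sq_scaled 8 m hmi hm0
      have : D k l = ∑ σ : L →+* ℂ, ‖σ (((8:ℕ):L) * m)‖ ^ 2 := by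
        simp only [hD, heq]
      rw [this]
      calc (64:ℝ) * (n:ℝ) = ((8:ℕ):ℝ)^2 * (n:ℝ) := by norm_num
      _ ≤ _ := hb
    have hex : ∃ a b, t a ≠ t b := by
      by_contra hall
      push_neg at hall
      have h1 : (0:L) = (8:ℕ) • t 0 := by
        rw [← htsum, Finset.sum_congr rfl (fun k _ => hall k 0), Finset.sum_const,
          Finset.card_univ, Fintype.card_fin]
      have h8 : ((8:ℕ):L) ≠ 0 := Nat.cast_ne_zero.mpr (by norm_num)
      rw [nsmul_eq_mul] at h1
      exact hnz 0 ((mul_eq_zero.mp h1.symm).resolve_left h8)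
    obtain ⟨a, b, hab⟩ := hex
    have hT : 14 * ((64:ℝ) * (n:ℝ)) ≤ ∑ k, ∑ l, D k l :=
      coreA t _ D hDpos hDlow a b hab
    have hper : ∀ σ : L →+* ℂ,
        (‖σ (β 0)‖ ^ 2 - (7 / 4 : ℝ) * (σ (β 0)).re) +
          ∑ k ∈ Finset.univ.filter (fun k : Fin 8 => k ≠ 0),
            (‖σ (β k)‖ ^ 2 + (1 / 4 : ℝ) * (σ (β k)).re)
        = (1/64) * ((1/16) * ∑ k, ∑ l, ‖σ (t k - t l)‖ ^ 2) - 7/8 := by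
      intro σ
      calc (‖σ (β 0)‖ ^ 2 - (7 / 4 : ℝ) * (σ (β 0)).re) +
          ∑ k ∈ Finset.univ.filter (fun k : Fin 8 => k ≠ 0),
            (‖σ (β k)‖ ^ 2 + (1 / 4 : ℝ) * (σ (β k)).re)
          = (1/64) * (∑ k, ‖(8:ℂ) * σ (β k) - cA k‖ ^ 2) - 7/8 :=
            exprA (fun k => σ (β k))
      _ = (1/64) * (∑ k, ‖σ (t k)‖ ^ 2) - 7/8 := by
          have e2 : (∑ k : Fin 8, ‖(8:ℂ) * σ (β k) - cA k‖ ^ 2)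
              = ∑ k : Fin 8, ‖σ (t k)‖ ^ 2 :=
            Finset.sum_congr rfl (fun k _ => by rw [hmap σ k])
          rw [e2]
      _ = (1/64) * ((1/16) * ∑ k, ∑ l, ‖σ (t k) - σ (t l)‖ ^ 2) - 7/8 := by
          rw [show (∑ k, ‖σ (t k)‖ ^ 2)
            = (1/16) * ∑ k, ∑ l, ‖σ (t k) - σ (t l)‖ ^ 2
            from pair_id (fun k => σ (t k)) (hσt σ)]
      _ = (1/64) * ((1/16) * ∑ k, ∑ l, ‖σ (t k - t l)‖ ^ 2) - 7/8 := by
          have e4 : (∑ k : Fin 8, ∑ l : Fin 8, ‖σ (t k) - σ (t l)‖ ^ 2)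
              = ∑ k : Fin 8, ∑ l : Fin 8, ‖σ (t k - t l)‖ ^ 2 :=
            Finset.sum_congr rfl (fun k _ => Finset.sum_congr rfl
              (fun l _ => by rw [map_sub σ (t k) (t l)]))
          rw [e4]
    have hswap : ∑ σ : L →+* ℂ, ∑ k : Fin 8, ∑ l : Fin 8, ‖σ (t k - t l)‖ ^ 2
        = ∑ k, ∑ l, D k l := by
      rw [Finset.sum_comm]
      exact Finset.sum_congr rfl fun k _ => Finset.sum_comm
    have hkey : (∑ σ : L →+* ℂ,
        ((‖σ (β 0)‖ ^ 2 - (7 / 4 : ℝ) * (σ (β 0)).re) +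
          ∑ k ∈ Finset.univ.filter (fun k : Fin 8 => k ≠ 0),
            (‖σ (β k)‖ ^ 2 + (1 / 4 : ℝ) * (σ (β k)).re)))
        = (1/1024) * (∑ k, ∑ l, D k l) - 7/8 * (n:ℝ) := by
      rw [Finset.sum_congr rfl (fun σ _ => hper σ), Finset.sum_sub_distrib,
        Finset.sum_const, Finset.card_univ, nsmul_eq_mul]
      have e5 : ∑ σ : L →+* ℂ,
          (1/64:ℝ) * ((1/16) * ∑ k : Fin 8, ∑ l : Fin 8, ‖σ (t k - t l)‖ ^ 2)
          = (1/1024) * ∑ σ : L →+* ℂ, ∑ k : Fin 8, ∑ l : Fin 8,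
              ‖σ (t k - t l)‖ ^ 2 := by
        rw [Finset.mul_sum]
        exact Finset.sum_congr rfl (fun σ _ => by ring)
      rw [e5, hswap, ← hndef]
      ring
    rw [hkey]
    linarith
  · -- PART B
    set t : Fin 8 → L := fun k => 4 * β k - (if (k:ℕ) < 2 then (3:L) else -1) with ht
    have hmap : ∀ (σ : L →+* ℂ) (k : Fin 8), σ (t k) = 4 * σ (β k) - cB k := by
      intro σ k
      by_cases hk : (k:ℕ) < 2
      · simp [ht, cB, hk, map_sub, map_mul, map_ofNat, show (k:ℕ) ≤ 1 by omega]
      · simp [ht, cB, hk, map_sub, map_mul, map_ofNat, map_neg, map_one, show ¬ (k:ℕ) ≤ 1 by omega]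
    have hint : ∀ k, IsIntegral ℤ (t k) := by
      intro k
      by_cases hk : (k:ℕ) < 2
      · have e : t k = ((2:ℤ):L) * (2 * β k) - ((3:ℤ):L) := by
          simp only [ht, if_pos hk]
          push_cast
          ring
        rw [e]
        exact ((intCast_isIntegral 2).mul (h2 k)).sub (intCast_isIntegral 3)
      · have e : t k = ((2:ℤ):L) * (2 * β k) + ((1:ℤ):L) := by
          simp only [ht, if_neg hk]
          push_cast
          ring
        rw [e]
        exact ((intCast_isIntegral 2).mul (h2 k)).add (intCast_isIntegral 1)
    have hnz : ∀ k, t k ≠ 0 := by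
      intro k
      by_cases hk : (k:ℕ) < 2
      · have e : t k = ((2:ℤ):L) * (2 * β k - ((2:ℤ):L)) + 1 := by
          simp only [ht, if_pos hk]
          push_cast
          ring
        rw [e]
        exact cy_add_one_ne 2 (by norm_num) _ ((h2 k).sub (intCast_isIntegral 2))
      · have e : t k = ((2:ℤ):L) * (2 * β k) + 1 := by
          simp only [ht, if_neg hk]
          push_cast
          ring
        rw [e]
        exact cy_add_one_ne 2 (by norm_num) _ (h2 k)
    have htsum : ∑ k, t k = 0 := by
      have he : ∑ k : Fin 8, (if (k:ℕ) < 2 then (3:L) else -1) = 0 := by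
        rw [Fin.sum_univ_eight, if_pos (by decide), if_pos (by decide), if_neg (by decide),
          if_neg (by decide), if_neg (by decide), if_neg (by decide), if_neg (by decide),
          if_neg (by decide)]
        ring
      have hs : ∑ k, t k = 4 * (∑ k, β k) - ∑ k : Fin 8, (if (k:ℕ) < 2 then (3:L) else -1) := by
        rw [Finset.mul_sum, ← Finset.sum_sub_distrib]
      rw [hs, hsum, he]
      ring
    have hσt : ∀ σ : L →+* ℂ, ∑ k, σ (t k) = 0 := by
      intro σ; rw [← map_sum, htsum, map_zero]
    have hconst : ∀ j : Fin 8, (if (j:ℕ) < 2 then (3:L) else -1)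
        = 4 * (if (j:ℕ) < 2 then (1:L) else 0) - 1 := by
      intro j; by_cases hj : (j:ℕ) < 2 <;> simp [hj] <;> norm_num
    have hdint : ∀ j : Fin 8, IsIntegral ℤ (if (j:ℕ) < 2 then (1:L) else 0) := by
      intro j
      by_cases hj : (j:ℕ) < 2 <;> simp [hj] <;>
        first | exact isIntegral_one | exact isIntegral_zero
    have hdiff4 : ∀ k l, t k ≠ t l →
        ∃ m : L, IsIntegral ℤ m ∧ m ≠ 0 ∧ t k - t l = ((4:ℕ):L) * m := by
      intro k l hkl
      refine ⟨(β k - β l) - ((if (k:ℕ) < 2 then (1:L) else 0) - (if (l:ℕ) < 2 then (1:L) else 0)),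
        (hdiff k l).sub ((hdint k).sub (hdint l)), ?_, ?_⟩
      · intro h0
        apply hkl
        have heq : t k - t l = ((4:ℕ):L) *
            ((β k - β l) - ((if (k:ℕ) < 2 then (1:L) else 0) - (if (l:ℕ) < 2 then (1:L) else 0))) := by
          simp only [ht]
          rw [hconst k, hconst l]
          push_cast
          ring
        rw [h0, mul_zero] at heq
        exact sub_eq_zero.mp heq
      · simp only [ht]
        rw [hconst k, hconst l]
        push_cast
        ring
    set D : Fin 8 → Fin 8 → ℝ :=
      fun k l => ∑ σ : L →+* ℂ, ‖σ (t k - t l)‖ ^ 2 with hD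
    have hDpos : ∀ k l, 0 ≤ D k l :=
      fun k l => Finset.sum_nonneg fun σ _ => by positivity
    have hDlow : ∀ k l, t k ≠ t l → (16:ℝ) * (n:ℝ) ≤ D k l := by
      intro k l hkl
      obtain ⟨m, hmi, hm0, heq⟩ := hdiff4 k l hkl
      have hb := sum_sq_scaled 4 m hmi hm0
      have hrw : D k l = ∑ σ : L →+* ℂ, ‖σ (((4:ℕ):L) * m)‖ ^ 2 := by
        simp only [hD, heq]
      rw [hrw]
      calc (16:ℝ) * (n:ℝ) = ((4:ℕ):ℝ)^2 * (n:ℝ) := by norm_num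
      _ ≤ _ := hb
    have hper : ∀ σ : L →+* ℂ,
        (∑ k ∈ Finset.univ.filter (fun k : Fin 8 => (k : ℕ) < 2),
            (‖σ (β k)‖ ^ 2 - (3 / 2 : ℝ) * (σ (β k)).re)) +
          ∑ k ∈ Finset.univ.filter (fun k : Fin 8 => 2 ≤ (k : ℕ)),
            (‖σ (β k)‖ ^ 2 + (1 / 2 : ℝ) * (σ (β k)).re)
        = (1/16) * (∑ k : Fin 8, ‖σ (t k)‖ ^ 2) - 3/2 := by
      intro σ
      calc (∑ k ∈ Finset.univ.filter (fun k : Fin 8 => (k : ℕ) < 2),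
            (‖σ (β k)‖ ^ 2 - (3 / 2 : ℝ) * (σ (β k)).re)) +
          ∑ k ∈ Finset.univ.filter (fun k : Fin 8 => 2 ≤ (k : ℕ)),
            (‖σ (β k)‖ ^ 2 + (1 / 2 : ℝ) * (σ (β k)).re)
          = (1/16) * (∑ k, ‖(4:ℂ) * σ (β k) - cB k‖ ^ 2) - 3/2 :=
            exprB (fun k => σ (β k))
      _ = (1/16) * (∑ k : Fin 8, ‖σ (t k)‖ ^ 2) - 3/2 := by
          have e2 : (∑ k : Fin 8, ‖(4:ℂ) * σ (β k) - cB k‖ ^ 2)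
              = ∑ k : Fin 8, ‖σ (t k)‖ ^ 2 :=
            Finset.sum_congr rfl (fun k _ => by rw [hmap σ k])
          rw [e2]
    have hkey : (∑ σ : L →+* ℂ,
        ((∑ k ∈ Finset.univ.filter (fun k : Fin 8 => (k : ℕ) < 2),
            (‖σ (β k)‖ ^ 2 - (3 / 2 : ℝ) * (σ (β k)).re)) +
          ∑ k ∈ Finset.univ.filter (fun k : Fin 8 => 2 ≤ (k : ℕ)),
            (‖σ (β k)‖ ^ 2 + (1 / 2 : ℝ) * (σ (β k)).re)))
        = (1/16) * (∑ σ : L →+* ℂ, ∑ k : Fin 8, ‖σ (t k)‖ ^ 2) - 3/2 * (n:ℝ) := by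
      rw [Finset.sum_congr rfl (fun σ _ => hper σ), Finset.sum_sub_distrib,
        Finset.sum_const, Finset.card_univ, nsmul_eq_mul, ← Finset.mul_sum, ← hndef]
      ring
    rw [hkey]
    by_cases hcase : ∀ j : Fin 8, ∃ k l : Fin 8, k ≠ j ∧ l ≠ j ∧ t k ≠ t l
    · obtain ⟨a, b, u, v, hau, hav, hbu, hbv, hab, huv⟩ := extract t hcase
      have hT : 24 * ((16:ℝ) * (n:ℝ)) ≤ ∑ k, ∑ l, D k l :=
        coreB t _ D hDpos hDlow a b u v hau hav hbu hbv hab huv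
      have hpair : ∑ σ : L →+* ℂ, ∑ k : Fin 8, ‖σ (t k)‖ ^ 2
          = (1/16) * ∑ k, ∑ l, D k l := by
        have hperσ : ∀ σ : L →+* ℂ, (∑ k : Fin 8, ‖σ (t k)‖ ^ 2)
            = (1/16) * ∑ k : Fin 8, ∑ l : Fin 8, ‖σ (t k - t l)‖ ^ 2 := by
          intro σ
          rw [show (∑ k : Fin 8, ‖σ (t k)‖ ^ 2)
            = (1/16) * ∑ k, ∑ l, ‖σ (t k) - σ (t l)‖ ^ 2
            from pair_id (fun k => σ (t k)) (hσt σ)]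
          have e4 : (∑ k : Fin 8, ∑ l : Fin 8, ‖σ (t k) - σ (t l)‖ ^ 2)
              = ∑ k : Fin 8, ∑ l : Fin 8, ‖σ (t k - t l)‖ ^ 2 :=
            Finset.sum_congr rfl (fun k _ => Finset.sum_congr rfl
              (fun l _ => by rw [map_sub σ (t k) (t l)]))
          rw [e4]
        rw [Finset.sum_congr rfl (fun σ _ => hperσ σ), ← Finset.mul_sum]
        congr 1
        rw [Finset.sum_comm]
        exact Finset.sum_congr rfl fun k _ => Finset.sum_comm
      rw [hpair]
      linarith
    · push_neg at hcase
      obtain ⟨j, hj⟩ := hcase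
      obtain ⟨k₀, hk₀⟩ := exists_ne j
      have hval : ∀ k, k ≠ j → t k = t k₀ := fun k hk => hj k k₀ hk hk₀
      have hjv : t j = ((7:ℕ):L) * (-(t k₀)) := by
        have h1 : t j + ∑ k ∈ Finset.univ.erase j, t k = ∑ k, t k :=
          Finset.add_sum_erase _ _ (Finset.mem_univ j)
        have hc2 : ∑ k ∈ Finset.univ.erase j, t k = (7:ℕ) • (t k₀) := by
          rw [Finset.sum_congr rfl (fun k hk => hval k (Finset.mem_erase.mp hk).1),
            Finset.sum_const, Finset.card_erase_of_mem (Finset.mem_univ j),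
            Finset.card_univ, Fintype.card_fin]
        rw [htsum, hc2, nsmul_eq_mul] at h1
        linear_combination h1
      have hbig : (49:ℝ) * (n:ℝ) ≤ ∑ σ : L →+* ℂ, ∑ k : Fin 8, ‖σ (t k)‖ ^ 2 := by
        have hd : ∑ σ : L →+* ℂ, ‖σ (t j)‖ ^ 2
            ≤ ∑ σ : L →+* ℂ, ∑ k : Fin 8, ‖σ (t k)‖ ^ 2 :=
          Finset.sum_le_sum (fun σ _ => Finset.single_le_sum
            (f := fun k => ‖σ (t k)‖ ^ 2) (fun k _ => by positivity)
            (Finset.mem_univ j))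
        have hs := sum_sq_scaled 7 (-(t k₀)) ((hint k₀).neg) (neg_ne_zero.mpr (hnz k₀))
        have hrw : ∑ σ : L →+* ℂ, ‖σ (t j)‖ ^ 2
            = ∑ σ : L →+* ℂ, ‖σ (((7:ℕ):L) * (-(t k₀)))‖ ^ 2 := by rw [hjv]
        calc (49:ℝ) * (n:ℝ) = ((7:ℕ):ℝ)^2 * (n:ℝ) := by norm_num
        _ ≤ ∑ σ : L →+* ℂ, ‖σ (((7:ℕ):L) * (-(t k₀)))‖ ^ 2 := hs
        _ = ∑ σ : L →+* ℂ, ‖σ (t j)‖ ^ 2 := hrw.symm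
        _ ≤ _ := hd
      linarith
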